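/- Let S be a commutative Noetherian ring and I, I_q ideals with I_q ⊆ I. Suppose I_q : I is a prime ideal not containing I. Then for all d ≥ 1, I_q : I = I_q I^{d-1} : I^d. -/

import Mathlib

theorem rowIdeal_eq_power_rowIdeal {S : Type*} [CommRing S] [IsNoetherianRing S]
    (I Iq : Ideal S) (h : Iq ≤ I)
    (hprime : (Iq.colon I).IsPrime) (hnc : ¬ I ≤ Iq.colon I) :
    ∀ d : ℕ, 1 ≤ d → Iq.colon I = (Iq * I ^ (d - 1)).colon (I ^ d : Ideal S) := by
  intro d hd
  have key : I ^ d = I * I ^ (d - 1) := by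
    conv_lhs => rw [← Nat.succ_pred_eq_of_pos hd]
    rw [pow_succ, mul_comm, Nat.pred_eq_sub_one]
  apply le_antisymm
  · intro x hx
    rw [Submodule.mem_colon] at hx ⊢
    intro p hp
    rw [key] at hp
    refine Submodule.mul_induction_on hp (fun a ha b hb => ?_) (fun p q hp hq => ?_)
    · have h1 : x * a ∈ Iq := hx a ha
      have h2 : (x * a) * b ∈ Iq * I ^ (d - 1) := Ideal.mul_mem_mul h1 hb
      simpa [smul_eq_mul, mul_assoc] using h2
    · simpa [smul_eq_mul, mul_add] using add_mem hp hq
  · intro x hx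
    obtain ⟨z, hzI, hzP⟩ := SetLike.not_le_iff_exists.mp hnc
    have hzd : z ^ (d - 1) ∉ Iq.colon I := fun hm => hzP (hprime.mem_of_pow_mem _ hm)
    have hxz : x * z ^ (d - 1) ∈ Iq.colon I := by
      rw [Submodule.mem_colon]
      intro y hy
      have hy' : y * z ^ (d - 1) ∈ I ^ d := by
        rw [key]
        exact Ideal.mul_mem_mul hy (Ideal.pow_mem_pow hzI _)
      have h3 : x * (y * z ^ (d - 1)) ∈ Iq :=
        Ideal.mul_le_left (Submodule.mem_colon.mp hx _ hy')
      have : (x * z ^ (d - 1)) * y = x * (y * z ^ (d - 1)) := by ring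
      simpa [smul_eq_mul, this] using h3
    exact (hprime.mem_or_mem hxz).resolve_right hzd
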